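/- Let V be a Hilbert space, V_1,...,V_M subspaces, P_i : V → V_i linear maps with sum_i P_i = id, ~V ⊂ V a subspace, and Π_i the orthogonal projection onto ~V ∩ V_i. Define the global stability constant c_pu := sup_{φ≠0} ( sum_i ||(1 - Π_i) P_i(φ)||² )^{1/2} / ||φ||. Then for any continuous linear functional F on V vanishing on ~V, ||F||_{V'} ≤ c_pu · ( sum_i ||F||_{V_i'}² )^{1/2}. -/

import Mathlib

open scoped RealInnerProductSpace

set_option synthInstance.maxHeartbeats 800000
set_option maxHeartbeats 1000000

/-- localization of the dual norm with a global stability constant. -/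
theorem dual_norm_localization_global_constant
    {V : Type*} [NormedAddCommGroup V] [InnerProductSpace ℝ V] [CompleteSpace V]
    {M : ℕ} (Vs : Fin M → Submodule ℝ V)
    (P : Fin M → V →ₗ[ℝ] V)
    (hPmem : ∀ i φ, P i φ ∈ Vs i)
    (hPsum : ∀ φ : V, ∑ i, P i φ = φ)
    (tV : Submodule ℝ V) [∀ i, Submodule.HasOrthogonalProjection (tV ⊓ Vs i)]
    (cpu : ℝ)
    (hcpu : ∀ φ : V,
      Real.sqrt (∑ i, ‖P i φ - (Submodule.orthogonalProjectionOnto (tV ⊓ Vs i) (P i φ) : V)‖ ^ 2)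
        ≤ cpu * ‖φ‖)
    (F : V →L[ℝ] ℝ) (hF : ∀ φ ∈ tV, F φ = 0) :
    ‖F‖ ≤ cpu * Real.sqrt (∑ i, ‖F.comp (Vs i).subtypeL‖ ^ 2) := by
  by_cases hV : ∃ φ₀ : V, φ₀ ≠ 0
  · obtain ⟨φ₀, hφ₀⟩ := hV
    have hcpu0 : 0 ≤ cpu := by
      have h := hcpu φ₀
      have h0 : (0:ℝ) ≤ Real.sqrt
          (∑ i, ‖P i φ₀ - (Submodule.orthogonalProjectionOnto (tV ⊓ Vs i) (P i φ₀) : V)‖ ^ 2) :=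
        Real.sqrt_nonneg _
      have hn : 0 < ‖φ₀‖ := norm_pos_iff.mpr hφ₀
      nlinarith
    refine F.opNorm_le_bound (by positivity) fun φ => ?_
    set g : Fin M → V := fun i => P i φ - (Submodule.orthogonalProjectionOnto (tV ⊓ Vs i) (P i φ) : V)
      with hg
    have key : F φ = ∑ i, F (g i) := by
      have h1 : F φ = ∑ i, F (P i φ) := by
        conv_lhs => rw [← hPsum φ]
        rw [map_sum]
      rw [h1]
      refine Finset.sum_congr rfl fun i _ => ?_
      have h2 : F ((Submodule.orthogonalProjectionOnto (tV ⊓ Vs i) (P i φ) : V)) = 0 :=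
        hF _ (Submodule.orthogonalProjectionOnto (tV ⊓ Vs i) (P i φ)).2.1
      simp only [hg, map_sub, h2, sub_zero]
    have hbound : ∀ i, |F (g i)| ≤ ‖F.comp (Vs i).subtypeL‖ * ‖g i‖ := by
      intro i
      have hmem : g i ∈ Vs i :=
        (Vs i).sub_mem (hPmem i φ) (Submodule.orthogonalProjectionOnto (tV ⊓ Vs i) (P i φ)).2.2
      have := (F.comp (Vs i).subtypeL).le_opNorm ⟨g i, hmem⟩
      simpa [Real.norm_eq_abs] using this
    calc ‖F φ‖ = |∑ i, F (g i)| := by rw [key, Real.norm_eq_abs]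
      _ ≤ ∑ i, |F (g i)| := Finset.abs_sum_le_sum_abs _ _
      _ ≤ ∑ i, ‖F.comp (Vs i).subtypeL‖ * ‖g i‖ :=
          Finset.sum_le_sum fun i _ => hbound i
      _ ≤ Real.sqrt (∑ i, ‖F.comp (Vs i).subtypeL‖ ^ 2) *
            Real.sqrt (∑ i, ‖g i‖ ^ 2) :=
          Real.sum_mul_le_sqrt_mul_sqrt _ _ _
      _ ≤ Real.sqrt (∑ i, ‖F.comp (Vs i).subtypeL‖ ^ 2) * (cpu * ‖φ‖) := by
          exact mul_le_mul_of_nonneg_left (hcpu φ) (Real.sqrt_nonneg _)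
      _ = cpu * Real.sqrt (∑ i, ‖F.comp (Vs i).subtypeL‖ ^ 2) * ‖φ‖ := by ring
  · push_neg at hV
    have hF0 : F = 0 := by
      ext x
      rw [hV x]
      simp
    have hsum : (∑ i, ‖F.comp (Vs i).subtypeL‖ ^ 2) = 0 := by
      refine Finset.sum_eq_zero fun i _ => ?_
      have h0 : F.comp (Vs i).subtypeL = 0 := by
        rw [hF0]; exact ContinuousLinearMap.zero_comp _
      simp [h0, ContinuousLinearMap.opNorm_zero]
    rw [hsum, Real.sqrt_zero, mul_zero, hF0, norm_zero]
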